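/- Let f : F_2^n → F_2^n be a negative and-net and let S be the set of all negative cycles of G(f). If f admits an S-quasi-delocalizing function, then there exists a Boolean network g, obtained from f by a finite sequence of one-step expansions, which is an and-net and has no local negative cycle (for no state y does the local interaction graph G(g)(y) contain a negative cycle). -/

import Mathlib

/-- States of a Boolean network on `n` components: `F_2^n`. -/
abbrev St (n : ℕ) := Fin n → ZMod 2

/-- The unit vector `e^i`. -/
def uv {n : ℕ} (i : Fin n) : St n := fun j => if j = i then 1 else 0

/-- There is an edge from `j` to `i` in the local interaction graph `G(f)(x)`,
i.e. `∂_j f_i (x) = 1`. -/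
def hasEdge {n : ℕ} (f : St n → St n) (x : St n) (j i : Fin n) : Prop :=
  f (x + uv j) i ≠ f x i

/-- `(j,i)` is a positive edge of `G(f)(x)`. -/
def edgePos {n : ℕ} (f : St n → St n) (x : St n) (j i : Fin n) : Prop :=
  hasEdge f x j i ∧ x j = f x i

/-- `(j,i)` is a negative edge of `G(f)(x)`. -/
def edgeNeg {n : ℕ} (f : St n → St n) (x : St n) (j i : Fin n) : Prop :=
  hasEdge f x j i ∧ x j ≠ f x i

/-- The local interaction graph `G(f)(x)` has a negative (elementary, directed) cycle:
a cyclic sequence of pairwise distinct vertices, each consecutive pair being an edge of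
`G(f)(x)`, with an odd number of negative edges. -/
def hasNegCycleAt {n : ℕ} (f : St n → St n) (x : St n) : Prop :=
  ∃ (m : ℕ) (v : Fin (m + 1) → Fin n), Function.Injective v ∧
    (∀ k, hasEdge f x (v k) (v (k + 1))) ∧
    Odd (Nat.card {k : Fin (m + 1) // edgeNeg f x (v k) (v (k + 1))})

/-- `f` is an and-net: each coordinate function is a product of literals. -/
def IsAndNet {n : ℕ} (f : St n → St n) : Prop :=
  ∀ i : Fin n, ∃ P N : Finset (Fin n), Disjoint P N ∧
    ∀ x : St n, f x i = (∏ j ∈ P, x j) * ∏ j ∈ N, (x j + 1)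

/-- `(j,i)` is a positive edge of the global interaction graph `G(f)`. -/
def gEdgePos {n : ℕ} (f : St n → St n) (j i : Fin n) : Prop := ∃ x, edgePos f x j i

/-- `(j,i)` is a negative edge of the global interaction graph `G(f)`. -/
def gEdgeNeg {n : ℕ} (f : St n → St n) (j i : Fin n) : Prop := ∃ x, edgeNeg f x j i

/-- `(j,i)` is an edge of the global interaction graph `G(f)`. -/
def gEdge {n : ℕ} (f : St n → St n) (j i : Fin n) : Prop := gEdgePos f j i ∨ gEdgeNeg f j i

/-- `f` is a negative and-net: each coordinate function is a product of negated literals. -/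
def IsNegAndNet {n : ℕ} (f : St n → St n) : Prop :=
  ∀ i : Fin n, ∃ N : Finset (Fin n), ∀ x : St n, f x i = ∏ j ∈ N, (x j + 1)

/-- `v` describes an elementary directed cycle of the global interaction graph `G(f)`. -/
def IsGCycle {n : ℕ} (f : St n → St n) {m : ℕ} (v : Fin (m + 1) → Fin n) : Prop :=
  Function.Injective v ∧ ∀ k, gEdge f (v k) (v (k + 1))

/-- `v` describes a negative cycle of `G(f)` (odd number of negative edges). -/
def IsNegGCycle {n : ℕ} (f : St n → St n) {m : ℕ} (v : Fin (m + 1) → Fin n) : Prop :=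
  IsGCycle f v ∧ Odd (Nat.card {k : Fin (m + 1) // gEdgeNeg f (v k) (v (k + 1))})

/-- `a` is a vertex of the cycle described by `v`. -/
def CycVertex {n m : ℕ} (v : Fin (m + 1) → Fin n) (a : Fin n) : Prop := ∃ k, v k = a

/-- `(a, b)` is an edge of the cycle described by `v`. -/
def CycEdge {n m : ℕ} (v : Fin (m + 1) → Fin n) (a b : Fin n) : Prop :=
  ∃ k, v k = a ∧ v (k + 1) = b

/-- `p` is a chord of the cycle `v` in `G(f)`: an edge of `G(f)` joining two vertices of
the cycle which is not an edge of the cycle. -/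
def IsChord {n : ℕ} (f : St n → St n) {m : ℕ} (v : Fin (m + 1) → Fin n)
    (p : Fin n × Fin n) : Prop :=
  gEdge f p.1 p.2 ∧ CycVertex v p.1 ∧ CycVertex v p.2 ∧ ¬ CycEdge v p.1 p.2

/-- `(χ₁, χ₂)` is an `S`-quasi-delocalizing function of `f`, where `S` is the set of all
negative cycles of `G(f)`: for each negative cycle `C`, `χ₁ C` is a chord `(i,k)` of `C`,
`χ₂ C` is the edge `(i,j)` of `C` starting from the same vertex `i`, and the images of
`χ₁` and `χ₂` (on `S`) are disjoint. -/
def QuasiDeloc {n : ℕ} (f : St n → St n)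
    (χ₁ χ₂ : (m : ℕ) → (Fin (m + 1) → Fin n) → Fin n × Fin n) : Prop :=
  (∀ (m : ℕ) (v : Fin (m + 1) → Fin n), IsNegGCycle f v →
      IsChord f v (χ₁ m v) ∧ CycEdge v (χ₂ m v).1 (χ₂ m v).2 ∧ (χ₁ m v).1 = (χ₂ m v).1) ∧
  (∀ (m : ℕ) (v : Fin (m + 1) → Fin n) (m' : ℕ) (v' : Fin (m' + 1) → Fin n),
      IsNegGCycle f v → IsNegGCycle f v' → χ₁ m v ≠ χ₂ m' v')

/-- `g` (on `m+1` variables) reduces over coordinate `c` to `h` (on `m` variables):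
`G(g)` has no loop on `c`, and `h` is obtained by substituting `g_c` for variable `c`. -/
def Reduces {m : ℕ} (c : Fin (m + 1)) (g : St (m + 1) → St (m + 1))
    (h : St m → St m) : Prop :=
  (∀ x : St (m + 1), g (x + uv c) c = g x c) ∧
  ∀ (x : St m) (i : Fin m),
    h x i = g (c.insertNth (g (c.insertNth 0 x) c) x) (c.succAbove i)

/-- `ExpandsTo f g`: `g` is obtained from `f` by a finite sequence of one-step
expansions (each step being the inverse of a reduction over some coordinate). -/
inductive ExpandsTo : {m : ℕ} → (St m → St m) → {m' : ℕ} → (St m' → St m') → Prop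
  | refl {m : ℕ} (f : St m → St m) : ExpandsTo f f
  | step {m : ℕ} {f : St m → St m} {m' : ℕ} {h : St m' → St m'}
      {g : St (m' + 1) → St (m' + 1)} (c : Fin (m' + 1)) :
      ExpandsTo f h → Reduces c g h → ExpandsTo f g

open scoped Classical
open Fin.CommRing

namespace QD

lemma zmod2_cases (a : ZMod 2) : a = 0 ∨ a = 1 := by revert a; decide

lemma zmod2_idem (a : ZMod 2) : a * a = a := by revert a; decide

lemma add_uv_ne {m : ℕ} (x : St m) (c j : Fin m) (h : j ≠ c) : (x + uv c) j = x j := by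
  simp [uv, h, Pi.add_apply]

lemma add_uv_self {m : ℕ} (x : St m) (c : Fin m) : (x + uv c) c = x c + 1 := by
  simp [uv, Pi.add_apply]

/-- product of negated literals over an index set -/
def negProd {m : ℕ} (S : Finset (Fin m)) (x : St m) : ZMod 2 := ∏ j ∈ S, (x j + 1)

lemma np_mem {m : ℕ} {S : Finset (Fin m)} {x : St m} {z : Fin m}
    (h : negProd S (x + uv z) ≠ negProd S x) : z ∈ S := by
  by_contra hz
  apply h
  unfold negProd
  exact Finset.prod_congr rfl fun j hj => by rw [add_uv_ne x z j (fun e => hz (e ▸ hj))]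

lemma np_others {m : ℕ} {S : Finset (Fin m)} {x : St m} {z : Fin m}
    (h : negProd S (x + uv z) ≠ negProd S x) : ∀ j ∈ S, j ≠ z → x j = 0 := by
  intro j hj hjz
  rcases zmod2_cases (x j) with h0 | h1
  · exact h0
  · exfalso
    have hxj : x j + 1 = 0 := by rw [h1]; decide
    have h2 : (x + uv z) j + 1 = 0 := by rw [add_uv_ne x z j hjz, hxj]
    apply h
    rw [negProd, negProd, Finset.prod_eq_zero hj h2, Finset.prod_eq_zero hj hxj]

lemma np_val {m : ℕ} {S : Finset (Fin m)} {x : St m} {z : Fin m}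
    (h : negProd S (x + uv z) ≠ negProd S x) : negProd S x = x z + 1 := by
  have hz := np_mem h
  have h1 : ∀ j ∈ S.erase z, x j + 1 = 1 := by
    intro j hj
    rw [np_others h j (Finset.mem_of_mem_erase hj) (Finset.ne_of_mem_erase hj)]
    decide
  rw [negProd, ← Finset.mul_prod_erase S _ hz, Finset.prod_eq_one h1, mul_one]

lemma np_indep {m : ℕ} {S : Finset (Fin m)} {z : Fin m} (hz : z ∉ S) (x : St m) :
    negProd S (x + uv z) = negProd S x :=
  by_contra fun h => hz (np_mem h)

end QD
namespace QD

section Fside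
variable {n : ℕ} {f : St n → St n} (hf : IsNegAndNet f)

/-- canonical input sets of a negative and-net -/
noncomputable def Nf (hf : IsNegAndNet f) (b : Fin n) : Finset (Fin n) := (hf b).choose

lemma f_eq (b : Fin n) (x : St n) : f x b = negProd (Nf hf b) x := (hf b).choose_spec x

lemma mem_of_hasEdge {x : St n} {l b : Fin n} (h : hasEdge f x l b) : l ∈ Nf hf b := by
  rw [hasEdge, f_eq hf, f_eq hf] at h
  exact np_mem h

lemma hasEdge_zero {l b : Fin n} (hl : l ∈ Nf hf b) : hasEdge f 0 l b := by
  rw [hasEdge, f_eq hf, f_eq hf]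
  intro h
  have h0 : negProd (Nf hf b) (0 : St n) = 1 := by
    unfold negProd
    apply Finset.prod_eq_one
    intro j _
    simp
  have h1 : negProd (Nf hf b) ((0 : St n) + uv l) = 0 := by
    apply Finset.prod_eq_zero hl
    rw [add_uv_self]
    simp only [Pi.zero_apply, zero_add]
    decide
  rw [h0, h1] at h
  exact absurd h (by decide)

lemma gEdgeNeg_of_mem {l b : Fin n} (hl : l ∈ Nf hf b) : gEdgeNeg f l b := by
  refine ⟨0, hasEdge_zero hf hl, ?_⟩
  have h := hasEdge_zero hf hl
  rw [hasEdge, f_eq hf, f_eq hf] at h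
  have := np_val h
  rw [f_eq hf, this]
  simp only [Pi.zero_apply, zero_add]
  decide

lemma mem_of_gEdge {l b : Fin n} (h : gEdge f l b) : l ∈ Nf hf b := by
  rcases h with ⟨x, hx, -⟩ | ⟨x, hx, -⟩ <;> exact mem_of_hasEdge hf hx

end Fside

section Layout
variable (n : ℕ)

/-- total number of variables of the expanded network -/
abbrev MM : ℕ := n + (n * n + n * n)

variable {n}

/-- embedding of original variables -/
def oE (b : Fin n) : Fin (MM n) := Fin.castAdd _ b

/-- the `t`-variable of pair `e` -/
def tE (e : Fin n × Fin n) : Fin (MM n) := Fin.natAdd n (Fin.castAdd (n*n) (finProdFinEquiv e))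

/-- the `u`-variable of pair `e` -/
def uE (e : Fin n × Fin n) : Fin (MM n) := Fin.natAdd n (Fin.natAdd (n*n) (finProdFinEquiv e))

lemma oE_val (b : Fin n) : (oE b : ℕ) = b := rfl
lemma tE_val (e : Fin n × Fin n) : (tE e : ℕ) = n + (finProdFinEquiv e : ℕ) := rfl
lemma uE_val (e : Fin n × Fin n) : (uE e : ℕ) = n + (n*n + (finProdFinEquiv e : ℕ)) := rfl

lemma enc_lt (e : Fin n × Fin n) : (finProdFinEquiv e : ℕ) < n * n := (finProdFinEquiv e).isLt

lemma oE_inj : Function.Injective (oE (n := n)) := fun a b h => by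
  have : ((oE a : Fin (MM n)) : ℕ) = ((oE b : Fin (MM n)) : ℕ) := congrArg Fin.val h
  rw [oE_val, oE_val] at this
  exact Fin.ext this

lemma tE_inj : Function.Injective (tE (n := n)) := fun a b h => by
  have : (finProdFinEquiv a : ℕ) = finProdFinEquiv b := by
    have := congrArg Fin.val h; rw [tE_val, tE_val] at this; omega
  exact finProdFinEquiv.injective (Fin.ext this)

lemma uE_inj : Function.Injective (uE (n := n)) := fun a b h => by
  have : (finProdFinEquiv a : ℕ) = finProdFinEquiv b := by
    have := congrArg Fin.val h; rw [uE_val, uE_val] at this; omega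
  exact finProdFinEquiv.injective (Fin.ext this)

lemma oE_ne_tE (b : Fin n) (e : Fin n × Fin n) : oE b ≠ tE e := fun h => by
  have := congrArg Fin.val h; rw [oE_val, tE_val] at this; omega
lemma oE_ne_uE (b : Fin n) (e : Fin n × Fin n) : oE b ≠ uE e := fun h => by
  have := congrArg Fin.val h; rw [oE_val, uE_val] at this
  have := b.isLt; omega
lemma tE_ne_uE (d e : Fin n × Fin n) : tE d ≠ uE e := fun h => by
  have := congrArg Fin.val h; rw [tE_val, uE_val] at this
  have := enc_lt d; omega

/-- case analysis on the layout -/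
lemma layout_cases (w : Fin (MM n)) :
    (∃ b, w = oE b) ∨ (∃ e, w = tE e) ∨ (∃ e, w = uE e) := by
  refine Fin.addCases (motive := fun w => (∃ b, w = oE b) ∨ (∃ e, w = tE e) ∨ (∃ e, w = uE e))
    (fun b => Or.inl ⟨b, rfl⟩) (fun w' => ?_) w
  refine Fin.addCases (motive := fun w' => (∃ b, Fin.natAdd n w' = oE b) ∨
      (∃ e, Fin.natAdd n w' = tE e) ∨ (∃ e, Fin.natAdd n w' = uE e))
    (fun i => Or.inr (Or.inl ⟨finProdFinEquiv.symm i, by rw [tE, Equiv.apply_symm_apply]⟩))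
    (fun i => Or.inr (Or.inr ⟨finProdFinEquiv.symm i, by rw [uE, Equiv.apply_symm_apply]⟩)) w'

end Layout

end QD
namespace QD

section Main
variable {n : ℕ} {f : St n → St n}

/-- the set of chords selected by `χ₁` -/
def Kset (f : St n → St n) (χ₁ : (m : ℕ) → (Fin (m + 1) → Fin n) → Fin n × Fin n) :
    Set (Fin n × Fin n) :=
  {p | ∃ (m : ℕ) (v : Fin (m+1) → Fin n), IsNegGCycle f v ∧ χ₁ m v = p}

/-- `(e,k)` is a chord pair: some negative cycle has `χ₂`-edge `e` and `χ₁`-chord `(e.1, k)` -/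
def Pch (f : St n → St n) (χ₁ χ₂ : (m : ℕ) → (Fin (m + 1) → Fin n) → Fin n × Fin n)
    (e : Fin n × Fin n) (k : Fin n) : Prop :=
  ∃ (m : ℕ) (v : Fin (m+1) → Fin n), IsNegGCycle f v ∧ χ₁ m v = (e.1, k) ∧ χ₂ m v = e

variable (hf : IsNegAndNet f) (χ₁ χ₂ : (m : ℕ) → (Fin (m + 1) → Fin n) → Fin n × Fin n)

/-- kept (chord) inputs of an original coordinate -/
noncomputable def NsK (b : Fin n) : Finset (Fin n) :=
  (Nf hf b).filter (fun l => (l,b) ∈ Kset f χ₁)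
/-- substituted inputs of an original coordinate -/
noncomputable def NsS (b : Fin n) : Finset (Fin n) :=
  (Nf hf b).filter (fun l => (l,b) ∉ Kset f χ₁)
/-- chord pairs targeting `b` -/
noncomputable def ChF (f : St n → St n)
    (χ₁ χ₂ : (m : ℕ) → (Fin (m + 1) → Fin n) → Fin n × Fin n)
    (b : Fin n) : Finset (Fin n × Fin n) :=
  Finset.univ.filter (fun e => Pch f χ₁ χ₂ e b)

/-- the input set of an original coordinate of the expansion -/
noncomputable def Nset (b : Fin n) : Finset (Fin (MM n)) :=
  ((NsK hf χ₁ b).image oE ∪ (NsS hf χ₁ b).image (fun l => uE (l, b)))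
    ∪ (ChF f χ₁ χ₂ b).image tE

/-- the expanded network -/
noncomputable def gg : St (MM n) → St (MM n) := fun x w =>
  Fin.addCases (motive := fun _ => ZMod 2)
    (fun b => negProd (Nset hf χ₁ χ₂ b) x)
    (fun w' => Fin.addCases (motive := fun _ => ZMod 2)
      (fun i => x (oE (finProdFinEquiv.symm i).1))
      (fun i => x (oE (finProdFinEquiv.symm i).1) * x (tE (finProdFinEquiv.symm i))) w') w

lemma gg_o (x : St (MM n)) (b : Fin n) :
    gg hf χ₁ χ₂ x (oE b) = negProd (Nset hf χ₁ χ₂ b) x := by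
  rw [gg, oE, Fin.addCases_left]

lemma gg_t (x : St (MM n)) (e : Fin n × Fin n) : gg hf χ₁ χ₂ x (tE e) = x (oE e.1) := by
  rw [gg, tE, Fin.addCases_right, Fin.addCases_left, Equiv.symm_apply_apply]

lemma gg_u (x : St (MM n)) (e : Fin n × Fin n) :
    gg hf χ₁ χ₂ x (uE e) = x (oE e.1) * x (tE e) := by
  rw [gg, uE, Fin.addCases_right, Fin.addCases_right, Equiv.symm_apply_apply]

/-- expansion of the product over `Nset` -/
lemma np_Nset (b : Fin n) (y : St (MM n)) :
    negProd (Nset hf χ₁ χ₂ b) y =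
      ((∏ l ∈ NsK hf χ₁ b, (y (oE l) + 1)) * ∏ l ∈ NsS hf χ₁ b, (y (uE (l, b)) + 1)) *
        ∏ e ∈ ChF f χ₁ χ₂ b, (y (tE e) + 1) := by
  have d1 : Disjoint ((NsK hf χ₁ b).image oE) ((NsS hf χ₁ b).image (fun l => uE (l, b))) := by
    rw [Finset.disjoint_left]
    rintro a ha hb
    rw [Finset.mem_image] at ha hb
    obtain ⟨l1, _, rfl⟩ := ha
    obtain ⟨l2, _, h2⟩ := hb
    exact oE_ne_uE l1 (l2, b) h2.symm
  have d2 : Disjoint ((NsK hf χ₁ b).image oE ∪ (NsS hf χ₁ b).image (fun l => uE (l, b)))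
      ((ChF f χ₁ χ₂ b).image tE) := by
    rw [Finset.disjoint_left]
    rintro a ha hb
    rw [Finset.mem_image] at hb
    obtain ⟨e, _, rfl⟩ := hb
    rw [Finset.mem_union, Finset.mem_image, Finset.mem_image] at ha
    rcases ha with ⟨l, _, h⟩ | ⟨l, _, h⟩
    · exact oE_ne_tE l e h
    · exact tE_ne_uE e (l, b) h.symm
  rw [negProd, Nset, Finset.prod_union d2, Finset.prod_union d1,
    Finset.prod_image (fun a _ c _ h => oE_inj h),
    Finset.prod_image (fun a _ c _ h => by
      have := uE_inj h; exact (Prod.ext_iff.1 this).1),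
    Finset.prod_image (fun a _ c _ h => tE_inj h)]

lemma Kset_chord (hQ : QuasiDeloc f χ₁ χ₂) {l b : Fin n} (h : (l, b) ∈ Kset f χ₁) : gEdge f l b := by
  obtain ⟨m, v, hneg, hv⟩ := h
  have := (hQ.1 m v hneg).1.1
  rwa [hv] at this

lemma Pch_K {e : Fin n × Fin n} {k : Fin n} (h : Pch f χ₁ χ₂ e k) :
    (e.1, k) ∈ Kset f χ₁ := by
  obtain ⟨m, v, hneg, hv, -⟩ := h
  exact ⟨m, v, hneg, hv⟩

lemma Pch_mem (hQ : QuasiDeloc f χ₁ χ₂) {e : Fin n × Fin n} {k : Fin n} (h : Pch f χ₁ χ₂ e k) : e.1 ∈ Nf hf k :=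
  mem_of_gEdge hf (Kset_chord χ₁ χ₂ hQ (Pch_K χ₁ χ₂ h))

/-- absorption: extra factors indexed by genuine inputs do not change the product -/
lemma absorb (b : Fin n) (x : St n) (S : Finset (Fin n × Fin n))
    (hS : ∀ e ∈ S, e.1 ∈ Nf hf b) :
    negProd (Nf hf b) x * ∏ e ∈ S, (x e.1 + 1) = negProd (Nf hf b) x := by
  induction S using Finset.induction with
  | empty => simp
  | insert _ _ hni ih =>
    rename_i a s
    rw [Finset.prod_insert hni, ← mul_assoc]
    have ha : negProd (Nf hf b) x * (x a.1 + 1) = negProd (Nf hf b) x := by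
      rw [negProd, ← Finset.mul_prod_erase _ _ (hS a (Finset.mem_insert_self a s)),
        mul_right_comm, zmod2_idem]
    rw [ha, ih (fun e he => hS e (Finset.mem_insert_of_mem he))]

end Main

end QD
namespace QD

lemma xeq {m : ℕ} (x : St m) {a b : Fin m} (h : (a : ℕ) = b) : x a = x b :=
  congrArg x (Fin.ext h)

lemma snoc_lt {m : ℕ} (x : St m) (z : ZMod 2) (j : Fin (m+1)) (h : (j : ℕ) < m) :
    (Fin.snoc x z : St (m+1)) j = x ⟨(j : ℕ), h⟩ := by
  have hj : j = Fin.castSucc ⟨(j : ℕ), h⟩ := Fin.ext rfl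
  conv_lhs => rw [hj]
  rw [Fin.snoc_castSucc]

lemma snoc_last' {m : ℕ} (x : St m) (z : ZMod 2) :
    (Fin.snoc x z : St (m+1)) (Fin.last m) = z := by rw [Fin.snoc_last]

section Chain
variable {n : ℕ} {f : St n → St n} (hf : IsNegAndNet f)
  (χ₁ χ₂ : (m : ℕ) → (Fin (m + 1) → Fin n) → Fin n × Fin n)

/-- value of an original variable read off a partial state -/
def ival (s : ℕ) (x : St (n + s)) (i : Fin n) : ZMod 2 :=
  x (Fin.castLE (Nat.le_add_right n s) i)

/-- value of a `t` variable: read it if present, compute otherwise -/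
def tval (s : ℕ) (x : St (n + s)) (e : Fin n × Fin n) : ZMod 2 :=
  if h : n + (finProdFinEquiv e : ℕ) < n + s then x ⟨n + (finProdFinEquiv e : ℕ), h⟩
  else ival s x e.1

/-- value of a `u` variable: read it if present, compute otherwise -/
def uval (s : ℕ) (x : St (n + s)) (e : Fin n × Fin n) : ZMod 2 :=
  if h : n + (n * n + (finProdFinEquiv e : ℕ)) < n + s then
    x ⟨n + (n * n + (finProdFinEquiv e : ℕ)), h⟩
  else ival s x e.1 * tval s x e

/-- extension of a partial state to a full state -/
def ext (s : ℕ) (x : St (n + s)) : St (MM n) := fun w =>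
  Fin.addCases (motive := fun _ => ZMod 2) (fun b => ival s x b)
    (fun w' => Fin.addCases (motive := fun _ => ZMod 2)
      (fun i => tval s x (finProdFinEquiv.symm i))
      (fun i => uval s x (finProdFinEquiv.symm i)) w') w

lemma ext_o (s : ℕ) (x : St (n + s)) (b : Fin n) : ext s x (oE b) = ival s x b := by
  rw [ext, oE, Fin.addCases_left]

lemma ext_t (s : ℕ) (x : St (n + s)) (e : Fin n × Fin n) : ext s x (tE e) = tval s x e := by
  rw [ext, tE, Fin.addCases_right, Fin.addCases_left, Equiv.symm_apply_apply]

lemma ext_u (s : ℕ) (x : St (n + s)) (e : Fin n × Fin n) : ext s x (uE e) = uval s x e := by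
  rw [ext, uE, Fin.addCases_right, Fin.addCases_right, Equiv.symm_apply_apply]

/-- the intermediate networks of the expansion chain -/
noncomputable def H (s : ℕ) : St (n + s) → St (n + s) := fun x w =>
  if h : n + s ≤ MM n then gg hf χ₁ χ₂ (ext s x) (Fin.castLE h w) else 0

/-- the value of the newly added variable at step `s` -/
def NVal (s : ℕ) (x : St (n + s)) : ZMod 2 :=
  if h : s < n * n then ival s x (finProdFinEquiv.symm ⟨s, h⟩).1
  else if h2 : s - n * n < n * n then
    ival s x (finProdFinEquiv.symm ⟨s - n * n, h2⟩).1 *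
      tval s x (finProdFinEquiv.symm ⟨s - n * n, h2⟩)
  else 0

variable {s : ℕ}

lemma ival_snoc (x : St (n + s)) (z : ZMod 2) (b : Fin n) :
    ival (s + 1) (Fin.snoc x z) b = ival s x b := by
  rw [ival, ival, snoc_lt _ _ _ (by have := b.isLt; exact Nat.lt_of_lt_of_le this (Nat.le_add_right n s))]
  exact xeq x rfl

lemma tval_snoc (x : St (n + s)) (e : Fin n × Fin n) :
    tval (s + 1) (Fin.snoc x (NVal s x)) e = tval s x e := by
  rcases Nat.lt_trichotomy (n + (finProdFinEquiv e : ℕ)) (n + s) with hlt | heq | hgt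
  · rw [tval, tval, dif_pos (by omega), dif_pos hlt, snoc_lt _ _ _ hlt]
  · have hs : s < n * n := by have := enc_lt e; omega
    have hes : (finProdFinEquiv e : ℕ) = s := by omega
    have he : finProdFinEquiv.symm ⟨s, hs⟩ = e := by
      rw [Equiv.symm_apply_eq]
      exact Fin.ext (show s = (finProdFinEquiv e : ℕ) by omega)
    rw [tval, tval, dif_pos (by omega), dif_neg (by omega)]
    rw [show (⟨n + (finProdFinEquiv e : ℕ), by omega⟩ : Fin (n + s + 1)) = Fin.last (n + s) from
      Fin.ext (show n + (finProdFinEquiv e : ℕ) = n + s by omega)]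
    refine (snoc_last' x (NVal s x)).trans ?_
    rw [NVal, dif_pos hs, he]
  · rw [tval, tval, dif_neg (by omega), dif_neg (by omega), ival_snoc]

lemma uval_snoc (x : St (n + s)) (e : Fin n × Fin n) :
    uval (s + 1) (Fin.snoc x (NVal s x)) e = uval s x e := by
  rcases Nat.lt_trichotomy (n + (n * n + (finProdFinEquiv e : ℕ))) (n + s) with hlt | heq | hgt
  · rw [uval, uval, dif_pos (by omega), dif_pos hlt, snoc_lt _ _ _ hlt]
  · have hs : ¬ s < n * n := by have := enc_lt e; omega
    have h2 : s - n * n < n * n := by have := enc_lt e; omega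
    have hes : (finProdFinEquiv e : ℕ) = s - n * n := by omega
    have he : finProdFinEquiv.symm ⟨s - n * n, h2⟩ = e := by
      rw [Equiv.symm_apply_eq]
      exact Fin.ext (show s - n * n = (finProdFinEquiv e : ℕ) by omega)
    rw [uval, uval, dif_pos (by omega), dif_neg (by omega)]
    rw [show (⟨n + (n * n + (finProdFinEquiv e : ℕ)), by omega⟩ : Fin (n + s + 1)) =
      Fin.last (n + s) from Fin.ext (show n + (n * n + (finProdFinEquiv e : ℕ)) = n + s
        by omega)]
    refine (snoc_last' x (NVal s x)).trans ?_
    rw [NVal, dif_neg hs, dif_pos h2, he]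
  · rw [uval, uval, dif_neg (by omega), dif_neg (by omega), ival_snoc, tval_snoc]

/-- extending by the computed value gives the same full state -/
lemma ext_snoc (x : St (n + s)) : ext (s + 1) (Fin.snoc x (NVal s x)) = ext s x := by
  funext w
  rcases layout_cases w with ⟨b, rfl⟩ | ⟨e, rfl⟩ | ⟨e, rfl⟩
  · rw [ext_o, ext_o, ival_snoc]
  · rw [ext_t, ext_t, tval_snoc]
  · rw [ext_u, ext_u, uval_snoc]

end Chain
end QD
namespace QD

lemma le_MM {n s : ℕ} (h : s ≤ n*n + n*n) : n + s ≤ MM n := Nat.add_le_add_left h n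
lemma lt_MM {n s : ℕ} (h : s < n*n + n*n) : n + s < MM n := Nat.add_lt_add_left h n

section Chain2
variable {n : ℕ} {f : St n → St n} (hf : IsNegAndNet f)
  (χ₁ χ₂ : (m : ℕ) → (Fin (m + 1) → Fin n) → Fin n × Fin n)

lemma ival_zero (x : St (n + 0)) (b : Fin n) : ival 0 x b = x b := xeq x rfl

lemma H_zero (hQ : QuasiDeloc f χ₁ χ₂) : H hf χ₁ χ₂ 0 = f := by
  have hp : n + 0 ≤ MM n := le_MM (Nat.zero_le _)
  funext x b
  rw [H, dif_pos hp]
  rw [show Fin.castLE hp b = oE b from Fin.ext rfl, gg_o, np_Nset]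
  have e1 : ∏ l ∈ NsK hf χ₁ b, (ext 0 x (oE l) + 1) = ∏ l ∈ NsK hf χ₁ b, (x l + 1) :=
    Finset.prod_congr rfl fun l _ => by rw [ext_o, ival_zero]
  have e2 : ∏ l ∈ NsS hf χ₁ b, (ext 0 x (uE (l, b)) + 1) = ∏ l ∈ NsS hf χ₁ b, (x l + 1) :=
    Finset.prod_congr rfl fun l _ => by
      rw [ext_u, uval, dif_neg (by omega), tval, dif_neg (by omega), ival_zero, zmod2_idem]
  have e3 : ∏ e ∈ ChF f χ₁ χ₂ b, (ext 0 x (tE e) + 1) = ∏ e ∈ ChF f χ₁ χ₂ b, (x e.1 + 1) :=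
    Finset.prod_congr rfl fun e _ => by
      rw [ext_t, tval, dif_neg (by omega), ival_zero]
  rw [e1, e2, e3, NsK, NsS, Finset.prod_filter_mul_prod_filter_not]
  have habs := absorb hf b x (ChF f χ₁ χ₂ b) (fun e he => by
    have := (Finset.mem_filter.1 he).2
    exact Pch_mem hf χ₁ χ₂ hQ this)
  rw [negProd] at habs
  rw [habs, f_eq hf, negProd]

lemma H_full : H hf χ₁ χ₂ (n*n + n*n) = gg hf χ₁ χ₂ := by
  funext x w
  rw [H, dif_pos (le_refl _)]
  have hx : ext (n*n+n*n) x = x := by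
    funext w'
    rcases layout_cases w' with ⟨b, rfl⟩ | ⟨e, rfl⟩ | ⟨e, rfl⟩
    · rw [ext_o, ival]; exact xeq x rfl
    · rw [ext_t, tval, dif_pos (by have := enc_lt e; omega)]; exact xeq x rfl
    · rw [ext_u, uval, dif_pos (by have := enc_lt e; omega)]; exact xeq x rfl
  rw [hx]
  exact congrArg _ (Fin.ext rfl)

variable {s : ℕ}

lemma gg_ext_last (hs : s < n*n + n*n) (x : St (n + s)) (z : ZMod 2) :
    gg hf χ₁ χ₂ (ext (s+1) (Fin.snoc x z)) ⟨n + s, lt_MM hs⟩ = NVal s x := by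
  by_cases h : s < n * n
  · set e₀ := finProdFinEquiv.symm (⟨s, h⟩ : Fin (n*n)) with he₀
    have henc : (finProdFinEquiv e₀ : ℕ) = s := by rw [he₀, Equiv.apply_symm_apply]
    have hW : (⟨n + s, lt_MM hs⟩ : Fin (MM n)) = tE e₀ := Fin.ext (by rw [tE_val, henc])
    rw [hW, gg_t, ext_o, ival,
      snoc_lt _ _ _ (Nat.lt_of_lt_of_le (e₀.1).isLt (Nat.le_add_right n s)),
      NVal, dif_pos h, ival]
    exact xeq x rfl
  · have h2 : s - n * n < n * n := by omega
    have hnn : 0 < n * n := by omega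
    set e₁ := finProdFinEquiv.symm (⟨s - n * n, h2⟩ : Fin (n*n)) with he₁
    have henc : (finProdFinEquiv e₁ : ℕ) = s - n * n := by rw [he₁, Equiv.apply_symm_apply]
    have hW : (⟨n + s, lt_MM hs⟩ : Fin (MM n)) = uE e₁ :=
      Fin.ext (show n + s = n + (n*n + (finProdFinEquiv e₁ : ℕ)) from by rw [henc]; omega)
    rw [hW, gg_u, ext_o, ext_t, ival,
      snoc_lt _ _ _ (Nat.lt_of_lt_of_le (e₁.1).isLt (Nat.le_add_right n s)),
      tval, dif_pos (by omega)]
    rw [snoc_lt _ _ _ (by show n + (finProdFinEquiv e₁ : ℕ) < n + s; omega),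
      NVal, dif_neg h, dif_pos h2, ← he₁, ival, tval, dif_pos (by omega)]
    exact congrArg₂ (· * ·) (xeq x rfl) (xeq x rfl)

lemma H_indep (hs : s < n*n + n*n) (x : St (n + s + 1)) :
    H hf χ₁ χ₂ (s+1) (x + uv (Fin.last (n+s))) (Fin.last (n+s)) =
      H hf χ₁ χ₂ (s+1) x (Fin.last (n+s)) := by
  have h1 : n + (s+1) ≤ MM n := le_MM (by omega)
  simp only [H]
  rw [dif_pos h1, dif_pos h1]
  have hcast : Fin.castLE h1 (Fin.last (n+s)) = (⟨n + s, lt_MM hs⟩ : Fin (MM n)) := Fin.ext rfl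
  rw [hcast]
  by_cases h : s < n * n
  · set e₀ := finProdFinEquiv.symm (⟨s, h⟩ : Fin (n*n)) with he₀
    have henc : (finProdFinEquiv e₀ : ℕ) = s := by rw [he₀, Equiv.apply_symm_apply]
    have hW : (⟨n + s, lt_MM hs⟩ : Fin (MM n)) = tE e₀ := Fin.ext (by rw [tE_val, henc])
    rw [hW, gg_t, gg_t, ext_o, ext_o, ival, ival]
    refine add_uv_ne x _ _ (fun hc => ?_)
    have hv : (e₀.1 : ℕ) = n + s := congrArg Fin.val hc
    have := (e₀.1).isLt
    omega
  · have h2 : s - n * n < n * n := by omega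
    have hnn : 0 < n * n := by omega
    set e₁ := finProdFinEquiv.symm (⟨s - n * n, h2⟩ : Fin (n*n)) with he₁
    have henc : (finProdFinEquiv e₁ : ℕ) = s - n * n := by rw [he₁, Equiv.apply_symm_apply]
    have hW : (⟨n + s, lt_MM hs⟩ : Fin (MM n)) = uE e₁ :=
      Fin.ext (show n + s = n + (n*n + (finProdFinEquiv e₁ : ℕ)) from by rw [henc]; omega)
    rw [hW, gg_u, gg_u, ext_o, ext_o, ext_t, ext_t, ival, ival, tval, tval,
      dif_pos (show n + (finProdFinEquiv e₁ : ℕ) < n + (s+1) by omega),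
      dif_pos (show n + (finProdFinEquiv e₁ : ℕ) < n + (s+1) by omega)]
    refine congrArg₂ (· * ·) (add_uv_ne x _ _ fun hc => ?_) (add_uv_ne x _ _ fun hc => ?_)
    · have hv : (e₁.1 : ℕ) = n + s := congrArg Fin.val hc
      have := (e₁.1).isLt
      omega
    · have hv : n + (finProdFinEquiv e₁ : ℕ) = n + s := congrArg Fin.val hc
      omega

lemma H_reduces (hs : s < n*n + n*n) :
    Reduces (Fin.last (n+s)) (H hf χ₁ χ₂ (s+1)) (H hf χ₁ χ₂ s) := by
  constructor
  · exact fun x => H_indep hf χ₁ χ₂ hs x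
  · intro x i
    simp only [Fin.insertNth_last, Fin.succAbove_last, cast_eq]
    have hle : n + (s+1) ≤ MM n := le_MM (by omega)
    have hle0 : n + s ≤ MM n := le_MM (le_of_lt hs)
    have hNV : H hf χ₁ χ₂ (s+1) (Fin.snoc x 0) (Fin.last (n+s)) = NVal s x := by
      simp only [H]
      rw [dif_pos hle,
        show Fin.castLE hle (Fin.last (n+s)) = (⟨n + s, lt_MM hs⟩ : Fin (MM n)) from
          Fin.ext rfl]
      exact gg_ext_last hf χ₁ χ₂ hs x 0
    rw [hNV]
    simp only [H]
    rw [dif_pos hle0, dif_pos hle, ext_snoc]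
    exact congrArg _ (Fin.ext rfl)

lemma expands_chain (hQ : QuasiDeloc f χ₁ χ₂) :
    ∀ s, s ≤ n*n + n*n → ExpandsTo f (H hf χ₁ χ₂ s) := by
  intro s
  induction s with
  | zero => intro _; rw [H_zero hf χ₁ χ₂ hQ]; exact ExpandsTo.refl f
  | succ s ih =>
    intro hs
    exact ExpandsTo.step (Fin.last (n+s)) (ih (by omega)) (H_reduces hf χ₁ χ₂ (by omega))

lemma expands_gg (hQ : QuasiDeloc f χ₁ χ₂) : ExpandsTo f (gg hf χ₁ χ₂) := by
  rw [← H_full hf χ₁ χ₂]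
  exact expands_chain hf χ₁ χ₂ hQ (n*n+n*n) (le_refl _)

end Chain2
end QD
namespace QD

section AndNet
variable {n : ℕ} {f : St n → St n} (hf : IsNegAndNet f)
  (χ₁ χ₂ : (m : ℕ) → (Fin (m + 1) → Fin n) → Fin n × Fin n)

lemma isAndNet_gg : IsAndNet (gg hf χ₁ χ₂) := by
  intro w
  rcases layout_cases w with ⟨b, rfl⟩ | ⟨e, rfl⟩ | ⟨e, rfl⟩
  · exact ⟨∅, Nset hf χ₁ χ₂ b, Finset.disjoint_empty_left _, fun x => by
      rw [gg_o]; simp [negProd]⟩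
  · exact ⟨{oE e.1}, ∅, Finset.disjoint_empty_right _, fun x => by
      rw [gg_t]; simp⟩
  · exact ⟨{oE e.1, tE e}, ∅, Finset.disjoint_empty_right _, fun x => by
      rw [gg_u, Finset.prod_pair (oE_ne_tE e.1 e)]; simp⟩

variable {y : St (MM n)} {z : Fin (MM n)}

lemma edge_t_src {e : Fin n × Fin n} (h : hasEdge (gg hf χ₁ χ₂) y z (tE e)) : z = oE e.1 := by
  by_contra hz
  apply h
  rw [gg_t, gg_t]
  exact add_uv_ne y z (oE e.1) (fun hh => hz hh.symm)

lemma edge_t_pos {e : Fin n × Fin n} (h : edgeNeg (gg hf χ₁ χ₂) y z (tE e)) : False := by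
  obtain ⟨h1, h2⟩ := h
  have hz := edge_t_src hf χ₁ χ₂ h1
  rw [gg_t, ← hz] at h2
  exact h2 rfl

lemma edge_u_src {e : Fin n × Fin n} (h : hasEdge (gg hf χ₁ χ₂) y z (uE e)) :
    (z = oE e.1 ∧ y (tE e) = 1) ∨ (z = tE e ∧ y (oE e.1) = 1) := by
  have hz : z = oE e.1 ∨ z = tE e := by
    by_contra hz
    push_neg at hz
    apply h
    rw [gg_u, gg_u, add_uv_ne y z (oE e.1) (fun hh => hz.1 hh.symm),
      add_uv_ne y z (tE e) (fun hh => hz.2 hh.symm)]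
  rcases hz with rfl | rfl
  · left
    refine ⟨rfl, ?_⟩
    rcases zmod2_cases (y (tE e)) with h0 | h1
    · exfalso
      apply h
      rw [gg_u, gg_u, add_uv_ne y _ (tE e) (fun hh => oE_ne_tE e.1 e hh.symm), h0,
        mul_zero, mul_zero]
    · exact h1
  · right
    refine ⟨rfl, ?_⟩
    rcases zmod2_cases (y (oE e.1)) with h0 | h1
    · exfalso
      apply h
      rw [gg_u, gg_u, add_uv_ne y _ (oE e.1) (oE_ne_tE e.1 e), h0, zero_mul, zero_mul]
    · exact h1

lemma edge_u_pos {e : Fin n × Fin n} (h : edgeNeg (gg hf χ₁ χ₂) y z (uE e)) : False := by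
  obtain ⟨h1, h2⟩ := h
  rcases edge_u_src hf χ₁ χ₂ h1 with ⟨rfl, ht⟩ | ⟨rfl, ho⟩
  · rw [gg_u, ht, mul_one] at h2; exact h2 rfl
  · rw [gg_u, ho, one_mul] at h2; exact h2 rfl

lemma edge_o_src {b : Fin n} (h : hasEdge (gg hf χ₁ χ₂) y z (oE b)) :
    z ∈ Nset hf χ₁ χ₂ b := by
  rw [hasEdge, gg_o, gg_o] at h
  exact np_mem h

lemma edge_o_others {b : Fin n} (h : hasEdge (gg hf χ₁ χ₂) y z (oE b)) :
    ∀ j ∈ Nset hf χ₁ χ₂ b, j ≠ z → y j = 0 := by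
  rw [hasEdge, gg_o, gg_o] at h
  exact np_others h

lemma edge_o_neg {b : Fin n} (h : hasEdge (gg hf χ₁ χ₂) y z (oE b)) :
    edgeNeg (gg hf χ₁ χ₂) y z (oE b) := by
  refine ⟨h, ?_⟩
  rw [hasEdge, gg_o, gg_o] at h
  rw [gg_o, np_val h]
  intro hh
  rcases zmod2_cases (y z) with h0 | h1
  · rw [h0] at hh; exact absurd hh (by decide)
  · rw [h1] at hh; exact absurd hh (by decide)

/-- membership in `Nset` unpacked -/
lemma mem_Nset {j : Fin (MM n)} {b : Fin n} :
    j ∈ Nset hf χ₁ χ₂ b ↔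
      (∃ l, (l ∈ Nf hf b ∧ (l, b) ∈ Kset f χ₁) ∧ j = oE l) ∨
      (∃ l, (l ∈ Nf hf b ∧ (l, b) ∉ Kset f χ₁) ∧ j = uE (l, b)) ∨
      (∃ e, Pch f χ₁ χ₂ e b ∧ j = tE e) := by
  constructor
  · intro hj
    rcases Finset.mem_union.1 hj with hj1 | hj3
    · rcases Finset.mem_union.1 hj1 with hj1 | hj2
      · obtain ⟨l, hl, rfl⟩ := Finset.mem_image.1 hj1
        exact Or.inl ⟨l, ⟨(Finset.mem_filter.1 hl).1, (Finset.mem_filter.1 hl).2⟩, rfl⟩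
      · obtain ⟨l, hl, rfl⟩ := Finset.mem_image.1 hj2
        exact Or.inr (Or.inl ⟨l, ⟨(Finset.mem_filter.1 hl).1, (Finset.mem_filter.1 hl).2⟩, rfl⟩)
    · obtain ⟨e, he, rfl⟩ := Finset.mem_image.1 hj3
      exact Or.inr (Or.inr ⟨e, (Finset.mem_filter.1 he).2, rfl⟩)
  · rintro (⟨l, ⟨h1, h2⟩, rfl⟩ | ⟨l, ⟨h1, h2⟩, rfl⟩ | ⟨e, he, rfl⟩)
    · exact Finset.mem_union_left _ (Finset.mem_union_left _
        (Finset.mem_image_of_mem _ (Finset.mem_filter.2 ⟨h1, h2⟩)))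
    · exact Finset.mem_union_left _ (Finset.mem_union_right _
        (Finset.mem_image_of_mem _ (Finset.mem_filter.2 ⟨h1, h2⟩)))
    · exact Finset.mem_union_right _
        (Finset.mem_image_of_mem _ (Finset.mem_filter.2 ⟨Finset.mem_univ e, he⟩))

end AndNet
end QD
namespace QD

section Seg
variable {n : ℕ} {f : St n → St n} (hf : IsNegAndNet f)
  (χ₁ χ₂ : (m : ℕ) → (Fin (m + 1) → Fin n) → Fin n × Fin n)

lemma layout_o {w : Fin (MM n)} (h : (w : ℕ) < n) : ∃ b, w = oE b := by
  rcases layout_cases w with hb | ⟨e, rfl⟩ | ⟨e, rfl⟩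
  · exact hb
  · rw [tE_val] at h; omega
  · rw [uE_val] at h; omega

lemma layout_t {w : Fin (MM n)} (h1 : n ≤ (w : ℕ)) (h2 : (w : ℕ) < n + n*n) :
    ∃ e, w = tE e := by
  rcases layout_cases w with ⟨b, rfl⟩ | he | ⟨e, rfl⟩
  · rw [oE_val] at h1; have := b.isLt; omega
  · exact he
  · rw [uE_val] at h2; omega

lemma layout_u {w : Fin (MM n)} (h1 : n + n*n ≤ (w : ℕ)) : ∃ e, w = uE e := by
  rcases layout_cases w with ⟨b, rfl⟩ | ⟨e, rfl⟩ | he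
  · rw [oE_val] at h1; have := b.isLt; omega
  · rw [tE_val] at h1; have := enc_lt e; omega
  · exact he

/-- the position of the next original vertex along the cycle -/
def nxt (n : ℕ) {M' : ℕ} (v : Fin (M'+1) → Fin (MM n)) (k : Fin (M'+1)) : Fin (M'+1) :=
  if (v (k+1) : ℕ) < n then k + 1
  else if (v (k+1) : ℕ) < n + n*n then (if (v (k+2) : ℕ) < n then k + 2 else k + 3)
  else k + 2

variable {M' : ℕ} {v : Fin (M'+1) → Fin (MM n)} {y : St (MM n)}

/-- a step after a `u` vertex goes to the substituted target -/
lemma after_u (hE : ∀ k, hasEdge (gg hf χ₁ χ₂) y (v k) (v (k+1)))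
    {e : Fin n × Fin n} {k' : Fin (M'+1)} (hsrc : v k' = uE e) :
    v (k'+1) = oE e.2 ∧ e.1 ∈ Nf hf e.2 ∧ (e.1, e.2) ∉ Kset f χ₁ := by
  have h := hE k'
  rw [hsrc] at h
  rcases layout_cases (v (k'+1)) with ⟨j, hj⟩ | ⟨e', hj⟩ | ⟨e', hj⟩
  · rw [hj] at h
    have hm := edge_o_src hf χ₁ χ₂ h
    rcases (mem_Nset hf χ₁ χ₂).1 hm with ⟨l, _, hl⟩ | ⟨l, hl, hl2⟩ | ⟨e'', _, hl⟩
    · exact absurd hl (fun hh => oE_ne_uE l e hh.symm)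
    · have he2 : e = (l, j) := uE_inj hl2
      obtain ⟨hl1, hlK⟩ := hl
      refine ⟨?_, ?_, ?_⟩
      · rw [hj, he2]
      · rw [he2]; exact hl1
      · rw [he2]; exact hlK
    · exact absurd hl (fun hh => tE_ne_uE e'' e hh.symm)
  · rw [hj] at h
    exact absurd (edge_t_src hf χ₁ χ₂ h) (fun hh => oE_ne_uE e'.1 e hh.symm)
  · rw [hj] at h
    rcases edge_u_src hf χ₁ χ₂ h with ⟨h1, -⟩ | ⟨h1, -⟩
    · exact absurd h1 (fun hh => oE_ne_uE e'.1 e hh.symm)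
    · exact absurd h1 (fun hh => tE_ne_uE e' e hh.symm)

/-- a step after a `t` vertex goes to a chord target or to its `u` vertex -/
lemma after_t (hE : ∀ k, hasEdge (gg hf χ₁ χ₂) y (v k) (v (k+1)))
    {e : Fin n × Fin n} {k' : Fin (M'+1)} (hsrc : v k' = tE e) :
    (∃ j, v (k'+1) = oE j ∧ Pch f χ₁ χ₂ e j) ∨ (v (k'+1) = uE e) := by
  have h := hE k'
  rw [hsrc] at h
  rcases layout_cases (v (k'+1)) with ⟨j, hj⟩ | ⟨e', hj⟩ | ⟨e', hj⟩
  · rw [hj] at h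
    have hm := edge_o_src hf χ₁ χ₂ h
    rcases (mem_Nset hf χ₁ χ₂).1 hm with ⟨l, _, hl⟩ | ⟨l, _, hl⟩ | ⟨e'', hP, hl⟩
    · exact absurd hl (fun hh => oE_ne_tE l e hh.symm)
    · exact absurd hl (tE_ne_uE e (l, j))
    · have : e = e'' := tE_inj hl
      exact Or.inl ⟨j, hj, this ▸ hP⟩
  · rw [hj] at h
    have h1 := edge_t_src hf χ₁ χ₂ h
    exact absurd h1 (fun hh => oE_ne_tE e'.1 e hh.symm)
  · rw [hj] at h
    rcases edge_u_src hf χ₁ χ₂ h with ⟨h1, -⟩ | ⟨h1, -⟩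
    · exact absurd h1 (fun hh => oE_ne_tE e'.1 e hh.symm)
    · have : e = e' := tE_inj h1
      exact Or.inr (this ▸ hj)

/-- the shape of a segment of the cycle between two consecutive original vertices -/
lemma seg_spec (hE : ∀ k, hasEdge (gg hf χ₁ χ₂) y (v k) (v (k+1)))
    (k : Fin (M'+1)) (hk : (v k : ℕ) < n) :
    (nxt n v k = k + 1 ∧ ∃ i j, v k = oE i ∧ v (k+1) = oE j ∧
        i ∈ Nf hf j ∧ (i, j) ∈ Kset f χ₁) ∨
    (nxt n v k = k + 2 ∧ ∃ e j, v k = oE e.1 ∧ v (k+1) = tE e ∧ v (k+2) = oE j ∧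
        Pch f χ₁ χ₂ e j) ∨
    (nxt n v k = k + 2 ∧ ∃ e, v k = oE e.1 ∧ v (k+1) = uE e ∧ v (k+2) = oE e.2 ∧
        y (tE e) = 1 ∧ e.1 ∈ Nf hf e.2 ∧ (e.1, e.2) ∉ Kset f χ₁) ∨
    (nxt n v k = k + 3 ∧ ∃ e, v k = oE e.1 ∧ v (k+1) = tE e ∧ v (k+2) = uE e ∧
        v (k+3) = oE e.2 ∧ y (oE e.1) = 1 ∧ e.1 ∈ Nf hf e.2 ∧ (e.1, e.2) ∉ Kset f χ₁) := by
  obtain ⟨i, hvk⟩ := layout_o hk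
  have h12 : k + 1 + 1 = k + 2 := by ring
  have h23 : k + 2 + 1 = k + 3 := by ring
  by_cases h1 : (v (k+1) : ℕ) < n
  · obtain ⟨j, hj⟩ := layout_o h1
    have h := hE k
    rw [hvk, hj] at h
    have hm := edge_o_src hf χ₁ χ₂ h
    rcases (mem_Nset hf χ₁ χ₂).1 hm with ⟨l, hl, hol⟩ | ⟨l, _, hol⟩ | ⟨e, _, hol⟩
    · have : i = l := oE_inj hol
      subst this
      exact Or.inl ⟨by rw [nxt, if_pos h1], i, j, hvk, hj, hl.1, hl.2⟩
    · exact absurd hol (oE_ne_uE i (l, j))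
    · exact absurd hol (oE_ne_tE i e)
  · by_cases h2 : (v (k+1) : ℕ) < n + n*n
    · obtain ⟨e, he⟩ := layout_t (le_of_not_gt h1) h2
      have hie : v k = oE e.1 := by
        have h := hE k
        rw [he] at h
        exact edge_t_src hf χ₁ χ₂ h
      rcases after_t hf χ₁ χ₂ hE he with ⟨j, hj, hP⟩ | hu
      · rw [h12] at hj
        have h3 : (v (k+2) : ℕ) < n := by rw [hj, oE_val]; exact j.isLt
        exact Or.inr (Or.inl ⟨by rw [nxt, if_neg h1, if_pos h2, if_pos h3], e, j, hie, he, hj, hP⟩)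
      · have hy : y (oE e.1) = 1 := by
          have h' := hE (k+1)
          rw [he, hu] at h'
          rcases edge_u_src hf χ₁ χ₂ h' with ⟨habs, -⟩ | ⟨-, hy⟩
          · exact absurd habs (fun hh => oE_ne_tE e.1 e hh.symm)
          · exact hy
        rw [h12] at hu
        have h3 : ¬ (v (k+2) : ℕ) < n := by rw [hu, uE_val]; omega
        obtain ⟨hj, hmem, hK⟩ := after_u hf χ₁ χ₂ hE hu
        rw [h23] at hj
        exact Or.inr (Or.inr (Or.inr ⟨by rw [nxt, if_neg h1, if_pos h2, if_neg h3],
          e, hie, he, hu, hj, hy, hmem, hK⟩))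
    · have hule : n + n*n ≤ (v (k+1) : ℕ) := by omega
      obtain ⟨e, he⟩ := layout_u hule
      have h := hE k
      rw [he] at h
      rcases edge_u_src hf χ₁ χ₂ h with ⟨h1e, hy⟩ | ⟨h1e, -⟩
      · obtain ⟨hj, hmem, hK⟩ := after_u hf χ₁ χ₂ hE he
        rw [h12] at hj
        exact Or.inr (Or.inr (Or.inl ⟨by rw [nxt, if_neg h1, if_neg h2], e,
          h1e, he, hj, hy, hmem, hK⟩))
      · rw [h1e, tE_val] at hk
        omega

end Seg
end QD
namespace QD

section Reach
variable {n : ℕ} {f : St n → St n} (hf : IsNegAndNet f)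
  (χ₁ χ₂ : (m : ℕ) → (Fin (m + 1) → Fin n) → Fin n × Fin n)
  {M' : ℕ} {v : Fin (M'+1) → Fin (MM n)} {y : St (MM n)}

lemma nxt_orig (hE : ∀ k, hasEdge (gg hf χ₁ χ₂) y (v k) (v (k+1)))
    {k : Fin (M'+1)} (hk : (v k : ℕ) < n) : (v (nxt n v k) : ℕ) < n := by
  rcases seg_spec hf χ₁ χ₂ hE k hk with ⟨hn, i, j, h1, hj, h3, h4⟩ |
    ⟨hn, e, j, h1, h2, hj, h4⟩ | ⟨hn, e, h1, h2, hj, h4, h5, h6⟩ |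
    ⟨hn, e, h1, h2, h3, hj, h5, h6, h7⟩
  · rw [hn, hj, oE_val]; exact j.isLt
  · rw [hn, hj, oE_val]; exact j.isLt
  · rw [hn, hj, oE_val]; exact (e.2).isLt
  · rw [hn, hj, oE_val]; exact (e.2).isLt

lemma gap_spec (hE : ∀ k, hasEdge (gg hf χ₁ χ₂) y (v k) (v (k+1)))
    {k : Fin (M'+1)} (hk : (v k : ℕ) < n) :
    ∃ g : ℕ, 1 ≤ g ∧ g ≤ 3 ∧ nxt n v k = k + (g : Fin (M'+1)) ∧
      ∀ r : ℕ, 1 ≤ r → r < g → ¬ ((v (k + (r : Fin (M'+1))) : ℕ) < n) := by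
  rcases seg_spec hf χ₁ χ₂ hE k hk with ⟨hn, i, j, h1, hj, h3, h4⟩ |
    ⟨hn, e, j, h1, h2, hj, h4⟩ | ⟨hn, e, h1, h2, hj, h4, h5, h6⟩ |
    ⟨hn, e, h1, h2, h3, hj, h5, h6, h7⟩
  · exact ⟨1, le_refl 1, by omega, by rw [hn, Nat.cast_one], fun r hr1 hr2 => by omega⟩
  · refine ⟨2, by omega, by omega, by rw [hn]; norm_num, fun r hr1 hr2 => ?_⟩
    have : r = 1 := by omega
    subst this
    rw [Nat.cast_one, h2, tE_val]
    omega
  · refine ⟨2, by omega, by omega, by rw [hn]; norm_num, fun r hr1 hr2 => ?_⟩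
    have : r = 1 := by omega
    subst this
    rw [Nat.cast_one, h2, uE_val]
    omega
  · refine ⟨3, by omega, by omega, by rw [hn]; norm_num, fun r hr1 hr2 => ?_⟩
    interval_cases r
    · rw [Nat.cast_one, h2, tE_val]; omega
    · rw [show ((2 : ℕ) : Fin (M'+1)) = 2 by norm_num, h3, uE_val]; omega

lemma reach (hE : ∀ k, hasEdge (gg hf χ₁ χ₂) y (v k) (v (k+1))) :
    ∀ d : ℕ, ∀ k, (v k : ℕ) < n → ((v (k + (d : Fin (M'+1))) : ℕ) < n) →
      ∃ r : ℕ, (nxt n v)^[r] k = k + (d : Fin (M'+1)) := by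
  intro d
  induction d using Nat.strong_induction_on with
  | _ d ih =>
    intro k hk hkd
    rcases Nat.eq_zero_or_pos d with rfl | hd
    · exact ⟨0, by simp⟩
    · obtain ⟨g, hg1, hg3, hgn, hskip⟩ := gap_spec hf χ₁ χ₂ hE hk
      have hgd : g ≤ d := by
        by_contra hc
        exact hskip d hd (by omega) hkd
      have hcast : (d : Fin (M'+1)) = (g : Fin (M'+1)) + ((d - g : ℕ) : Fin (M'+1)) := by
        rw [← Nat.cast_add]; congr 1; omega
      have htarget : nxt n v k + ((d - g : ℕ) : Fin (M'+1)) = k + (d : Fin (M'+1)) := by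
        rw [hgn, hcast]; ring
      obtain ⟨r, hr⟩ := ih (d - g) (by omega) (nxt n v k) (nxt_orig hf χ₁ χ₂ hE hk)
        (by rw [htarget]; exact hkd)
      exact ⟨r + 1, by rw [Function.iterate_succ_apply]; exact hr.trans htarget⟩

end Reach
end QD
namespace QD

section Final
variable {n : ℕ} {f : St n → St n} (hf : IsNegAndNet f)
  (χ₁ χ₂ : (m : ℕ) → (Fin (m + 1) → Fin n) → Fin n × Fin n)

lemma gEdge_of_mem {l b : Fin n} (hl : l ∈ Nf hf b) : gEdge f l b :=
  Or.inr (gEdgeNeg_of_mem hf hl)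

theorem no_negcycle_gg (hQ : QuasiDeloc f χ₁ χ₂) (y : St (MM n)) :
    ¬ hasNegCycleAt (gg hf χ₁ χ₂) y := by
  rintro ⟨M', v, hinj, hE, hodd⟩
  classical
  -- negative edges are exactly the edges into original vertices
  have hiff : ∀ k : Fin (M'+1), edgeNeg (gg hf χ₁ χ₂) y (v k) (v (k+1)) ↔ ((v (k+1) : ℕ) < n) := by
    intro k
    constructor
    · intro hEn
      by_contra hno
      rcases layout_cases (v (k+1)) with ⟨b, hb⟩ | ⟨e, hb⟩ | ⟨e, hb⟩
      · exact hno (by rw [hb, oE_val]; exact b.isLt)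
      · exact edge_t_pos hf χ₁ χ₂ (hb ▸ hEn)
      · exact edge_u_pos hf χ₁ χ₂ (hb ▸ hEn)
    · intro hor
      obtain ⟨b, hb⟩ := layout_o hor
      rw [hb]
      exact edge_o_neg hf χ₁ χ₂ (hb ▸ hE k)
  have hodd2 : Odd (Nat.card {k : Fin (M'+1) // (v k : ℕ) < n}) := by
    have e1 : {k : Fin (M'+1) // edgeNeg (gg hf χ₁ χ₂) y (v k) (v (k+1))} ≃
        {k : Fin (M'+1) // (v (k+1) : ℕ) < n} := Equiv.subtypeEquivRight hiff
    have e2 : {k : Fin (M'+1) // (v (k+1) : ℕ) < n} ≃ {k : Fin (M'+1) // (v k : ℕ) < n} :=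
      Equiv.subtypeEquiv (Equiv.addRight (1 : Fin (M'+1))) (fun a => by
        simp [Equiv.coe_addRight])
    rw [← Nat.card_congr (e1.trans e2)]
    exact hodd
  have hpos : 0 < Nat.card {k : Fin (M'+1) // (v k : ℕ) < n} := hodd2.pos
  obtain ⟨a₀, ha₀⟩ : ∃ k : Fin (M'+1), (v k : ℕ) < n := by
    rw [Nat.card_eq_fintype_card] at hpos
    obtain ⟨⟨k, hk⟩⟩ := Fintype.card_pos_iff.1 hpos
    exact ⟨k, hk⟩
  set F := nxt n v with hF
  have horb : ∀ r : ℕ, (v (F^[r] a₀) : ℕ) < n := by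
    intro r
    induction r with
    | zero => exact ha₀
    | succ r ih =>
      rw [Function.iterate_succ_apply']
      exact nxt_orig hf χ₁ χ₂ hE ih
  -- a₀ is periodic
  have hper : ∃ p : ℕ, 0 < p ∧ Function.IsPeriodicPt F p a₀ := by
    have h1 : (v (F a₀) : ℕ) < n := by
      have := horb 1
      rwa [Function.iterate_one] at this
    have hq2 : F a₀ + (((a₀ - F a₀ : Fin (M'+1)) : ℕ) : Fin (M'+1)) = a₀ := by
      rw [Fin.cast_val_eq_self]; ring
    obtain ⟨r, hr⟩ := reach hf χ₁ χ₂ hE ((a₀ - F a₀ : Fin (M'+1)) : ℕ) (F a₀) h1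
      (by rw [hq2]; exact ha₀)
    exact ⟨r + 1, by omega,
      show F^[r+1] a₀ = a₀ by rw [Function.iterate_succ_apply]; exact hr.trans hq2⟩
  obtain ⟨p, hp, hpp⟩ := hper
  set P := Function.minimalPeriod F a₀ with hP
  have hPpos : 0 < P := Function.IsPeriodicPt.minimalPeriod_pos hp hpp
  have hsurj : ∀ q : Fin (M'+1), (v q : ℕ) < n → ∃ r : ℕ, r < P ∧ F^[r] a₀ = q := by
    intro q hq
    have hq2 : a₀ + (((q - a₀ : Fin (M'+1)) : ℕ) : Fin (M'+1)) = q := by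
      rw [Fin.cast_val_eq_self]; ring
    obtain ⟨r, hr⟩ := reach hf χ₁ χ₂ hE ((q - a₀ : Fin (M'+1)) : ℕ) a₀ ha₀
      (by rw [hq2]; exact hq)
    refine ⟨r % P, Nat.mod_lt _ hPpos, ?_⟩
    rw [hP, Function.iterate_mod_minimalPeriod_eq]
    exact hr.trans hq2
  have hinjP : ∀ r1 r2 : ℕ, r1 < P → r2 < P → F^[r1] a₀ = F^[r2] a₀ → r1 = r2 := by
    intro r1 r2 h1 h2 hh
    exact Function.iterate_injOn_Iio_minimalPeriod (Set.mem_Iio.2 h1) (Set.mem_Iio.2 h2) hh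
  have hcard : P = Fintype.card {k : Fin (M'+1) // (v k : ℕ) < n} := by
    have hbij : Function.Bijective (fun r : Fin P => (⟨F^[(r : ℕ)] a₀, horb _⟩ :
        {k : Fin (M'+1) // (v k : ℕ) < n})) := by
      constructor
      · intro r1 r2 hh
        exact Fin.ext (hinjP _ _ r1.isLt r2.isLt (congrArg Subtype.val hh))
      · rintro ⟨q, hq⟩
        obtain ⟨r, hrP, hr⟩ := hsurj q hq
        exact ⟨⟨r, hrP⟩, Subtype.ext hr⟩
    rw [← Fintype.card_of_bijective hbij, Fintype.card_fin]
  have hoddP : Odd P := by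
    rw [hcard, ← Nat.card_eq_fintype_card]
    exact hodd2
  obtain ⟨m', hm'⟩ : ∃ m', P = m' + 1 := ⟨P - 1, by omega⟩
  set ψ : ℕ → Fin (M'+1) := fun r => F^[r] a₀ with hψ
  set w : Fin (m'+1) → Fin n := fun r => ⟨(v (ψ (r : ℕ)) : ℕ), horb _⟩ with hw
  have hva : ∀ r : Fin (m'+1), v (ψ (r : ℕ)) = oE (w r) := fun r => Fin.ext rfl
  have hsucc : ∀ r : Fin (m'+1), ψ ((r + 1 : Fin (m'+1)) : ℕ) = F (ψ (r : ℕ)) := by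
    intro r
    rw [Fin.val_add_one]
    by_cases hr : r = Fin.last m'
    · rw [if_pos hr]
      have hrv : (r : ℕ) = m' := by rw [hr]; rfl
      show F^[0] a₀ = F (F^[(r : ℕ)] a₀)
      rw [← Function.iterate_succ_apply' F (r : ℕ) a₀, hrv]
      show a₀ = F^[m' + 1] a₀
      rw [← hm', hP]
      exact Function.iterate_minimalPeriod.symm
    · rw [if_neg hr]
      exact Function.iterate_succ_apply' F (r : ℕ) a₀
  have hw1 : ∀ (r : Fin (m'+1)) (j : Fin n), v (F (ψ (r : ℕ))) = oE j → w (r + 1) = j := by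
    intro r j hj
    apply Fin.ext
    show (v (ψ ((r + 1 : Fin (m'+1)) : ℕ)) : ℕ) = (j : ℕ)
    rw [hsucc r, hj, oE_val]
  -- each projected edge is an edge of f
  have hedge_proj : ∀ r : Fin (m'+1), (w r) ∈ Nf hf (w (r + 1)) := by
    intro r
    rcases seg_spec hf χ₁ χ₂ hE (ψ (r : ℕ)) (horb _) with ⟨hn, i, j, h1, hj, h3, h4⟩ |
      ⟨hn, e, j, h1, h2, hj, h4⟩ | ⟨hn, e, h1, h2, hj, h4, h5, h6⟩ |
      ⟨hn, e, h1, h2, h3, hj, h5, h6, h7⟩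
    · have hwr : w r = i := oE_inj ((hva r).symm.trans h1)
      have hwr1 : w (r + 1) = j := hw1 r j (by rw [hF, hn]; exact hj)
      rw [hwr, hwr1]; exact h3
    · have hwr : w r = e.1 := oE_inj ((hva r).symm.trans h1)
      have hwr1 : w (r + 1) = j := hw1 r j (by rw [hF, hn]; exact hj)
      rw [hwr, hwr1]; exact Pch_mem hf χ₁ χ₂ hQ h4
    · have hwr : w r = e.1 := oE_inj ((hva r).symm.trans h1)
      have hwr1 : w (r + 1) = e.2 := hw1 r e.2 (by rw [hF, hn]; exact hj)
      rw [hwr, hwr1]; exact h5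
    · have hwr : w r = e.1 := oE_inj ((hva r).symm.trans h1)
      have hwr1 : w (r + 1) = e.2 := hw1 r e.2 (by rw [hF, hn]; exact hj)
      rw [hwr, hwr1]; exact h6
  -- the projection is a negative cycle of f
  have hneg : IsNegGCycle f w := by
    refine ⟨⟨?_, ?_⟩, ?_⟩
    · intro r1 r2 hh
      have hv12 : v (ψ (r1 : ℕ)) = v (ψ (r2 : ℕ)) := by
        rw [hva r1, hva r2, hh]
      have hψ12 : ψ (r1 : ℕ) = ψ (r2 : ℕ) := hinj hv12
      have hb1 : (r1 : ℕ) < P := by rw [hm']; exact r1.isLt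
      have hb2 : (r2 : ℕ) < P := by rw [hm']; exact r2.isLt
      exact Fin.ext (hinjP _ _ hb1 hb2 hψ12)
    · intro r
      exact gEdge_of_mem hf (hedge_proj r)
    · have hall : ∀ r : Fin (m'+1), gEdgeNeg f (w r) (w (r + 1)) :=
        fun r => gEdgeNeg_of_mem hf (hedge_proj r)
      rw [Nat.card_congr (Equiv.subtypeUnivEquiv hall), Nat.card_eq_fintype_card,
        Fintype.card_fin]
      rw [← hm']
      exact hoddP
  -- apply the quasi-delocalizing hypothesis
  obtain ⟨⟨hgE, hv1, hv2, hnotcyc⟩, hcyc2, hsame⟩ := hQ.1 m' w hneg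
  set p1 := χ₁ m' w with hp1
  set p2 := χ₂ m' w with hp2
  have hp2e : χ₂ m' w = (p1.1, p2.2) := Prod.ext hsame.symm rfl
  have F1 : (p1.1, p1.2) ∈ Kset f χ₁ := ⟨m', w, hneg, Prod.ext rfl rfl⟩
  have F2 : Pch f χ₁ χ₂ (p1.1, p2.2) p1.2 := ⟨m', w, hneg, Prod.ext rfl rfl, hp2e⟩
  have F3 : p1.1 ∈ Nf hf p1.2 := mem_of_gEdge hf hgE
  have F4 : (p1.1, p2.2) ∉ Kset f χ₁ := by
    rintro ⟨m'', v'', hneg'', hv''⟩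
    exact hQ.2 m'' v'' m' w hneg'' hneg (hv''.trans hp2e.symm)
  -- locate the χ₂ edge on the cycle
  obtain ⟨r, hr1, hr2⟩ := hcyc2
  have hr1' : w r = p1.1 := by rw [hr1, hsame]
  have hsegr := seg_spec hf χ₁ χ₂ hE (ψ (r : ℕ)) (horb _)
  -- in every possible case we obtain the α or β pattern
  have hαβ : (v (ψ (r : ℕ) + 1) = uE (p1.1, p2.2) ∧ y (tE (p1.1, p2.2)) = 1) ∨
      (v (ψ (r : ℕ) + 1) = tE (p1.1, p2.2) ∧ v (ψ (r : ℕ) + 2) = uE (p1.1, p2.2) ∧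
        y (oE p1.1) = 1) := by
    rcases hsegr with ⟨hn, i, j, h1, hj, h3, h4⟩ |
      ⟨hn, e, j, h1, h2, hj, h4⟩ | ⟨hn, e, h1, h2, hj, h4, h5, h6⟩ |
      ⟨hn, e, h1, h2, h3, hj, h5, h6, h7⟩
    · exfalso
      have hi : i = p1.1 := (oE_inj ((hva r).symm.trans h1)).symm.trans hr1'
      have hjj : j = p2.2 := (hw1 r j (by rw [hF, hn]; exact hj)).symm.trans hr2
      exact F4 (by rw [← hi, ← hjj]; exact h4)
    · exfalso
      have hi : e.1 = p1.1 := (oE_inj ((hva r).symm.trans h1)).symm.trans hr1'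
      have hjj : j = p2.2 := (hw1 r j (by rw [hF, hn]; exact hj)).symm.trans hr2
      exact F4 (by rw [← hi, ← hjj]; exact Pch_K χ₁ χ₂ h4)
    · left
      have hi : e.1 = p1.1 := (oE_inj ((hva r).symm.trans h1)).symm.trans hr1'
      have hjj : e.2 = p2.2 := (hw1 r e.2 (by rw [hF, hn]; exact hj)).symm.trans hr2
      have he' : e = (p1.1, p2.2) := Prod.ext hi hjj
      rw [← he']
      exact ⟨h2, h4⟩
    · right
      have hi : e.1 = p1.1 := (oE_inj ((hva r).symm.trans h1)).symm.trans hr1'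
      have hjj : e.2 = p2.2 := (hw1 r e.2 (by rw [hF, hn]; exact hj)).symm.trans hr2
      have he' : e = (p1.1, p2.2) := Prod.ext hi hjj
      have hyo : y (oE p1.1) = 1 := by rw [← hi]; exact h5
      rw [← he']
      exact ⟨h2, h3, hyo⟩
  -- locate the chord target on the cycle
  obtain ⟨R, hR⟩ := hv2
  have hvc : v (ψ (R : ℕ)) = oE p1.2 := by rw [hva R, hR]
  set c := ψ (R : ℕ) with hc
  have hc1 : c - 1 + 1 = c := by ring
  have hEc : hasEdge (gg hf χ₁ χ₂) y (v (c - 1)) (oE p1.2) := by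
    have := hE (c - 1)
    rwa [hc1, hvc] at this
  have hva' : v (ψ (r : ℕ)) = oE p1.1 := by rw [hva r, hr1']
  -- the in-edge source differs from both forbidden vertices
  have hs1 : v (c - 1) ≠ oE p1.1 := by
    intro hs
    have hca : c - 1 = ψ (r : ℕ) := hinj (hs.trans hva'.symm)
    rcases hαβ with ⟨hu, -⟩ | ⟨ht, -, -⟩
    · rw [← hca, hc1] at hu
      rw [hu] at hvc
      exact oE_ne_uE p1.2 (p1.1, p2.2) hvc.symm
    · rw [← hca, hc1] at ht
      rw [ht] at hvc
      exact oE_ne_tE p1.2 (p1.1, p2.2) hvc.symm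
  have hs2 : v (c - 1) ≠ tE (p1.1, p2.2) := by
    intro hs
    have hc2 : c - 1 - 1 + 1 = c - 1 := by ring
    have hEc2 : hasEdge (gg hf χ₁ χ₂) y (v (c - 1 - 1)) (tE (p1.1, p2.2)) := by
      have := hE (c - 1 - 1)
      rwa [hc2, hs] at this
    have hsrc := edge_t_src hf χ₁ χ₂ hEc2
    have hca : c - 1 - 1 = ψ (r : ℕ) := hinj (hsrc.trans hva'.symm)
    rcases hαβ with ⟨hu, -⟩ | ⟨-, hu2, -⟩
    · rw [← hca, hc2] at hu
      exact tE_ne_uE (p1.1, p2.2) (p1.1, p2.2) (hs.symm.trans hu)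
    · have hstep : c - 1 - 1 + 2 = c := by ring
      rw [← hca, hstep] at hu2
      rw [hu2] at hvc
      exact oE_ne_uE p1.2 (p1.1, p2.2) hvc.symm
  -- presence constraints at the chord target
  have hothers := edge_o_others hf χ₁ χ₂ hEc
  have hmem1 : oE p1.1 ∈ Nset hf χ₁ χ₂ p1.2 :=
    (mem_Nset hf χ₁ χ₂).2 (Or.inl ⟨p1.1, ⟨F3, F1⟩, rfl⟩)
  have hmem2 : tE (p1.1, p2.2) ∈ Nset hf χ₁ χ₂ p1.2 :=
    (mem_Nset hf χ₁ χ₂).2 (Or.inr (Or.inr ⟨(p1.1, p2.2), F2, rfl⟩))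
  have hy0 : y (oE p1.1) = 0 := hothers _ hmem1 (fun hh => hs1 hh.symm)
  have hyt0 : y (tE (p1.1, p2.2)) = 0 := hothers _ hmem2 (fun hh => hs2 hh.symm)
  rcases hαβ with ⟨-, hyt⟩ | ⟨-, -, hyo⟩
  · rw [hyt0] at hyt; exact absurd hyt (by decide)
  · rw [hy0] at hyo; exact absurd hyo (by decide)

end Final
end QD
/-- If a negative and-net `f` admits an `S`-quasi-delocalizing function, where `S` is the
set of negative cycles of `G(f)`, then `f` can be expanded (by a finite sequence of
one-step expansions) to an and-net `g` with no local negative cycle. -/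
theorem stmt_4 (n : ℕ) (f : St n → St n) (hf : IsNegAndNet f)
    (hχ : ∃ χ₁ χ₂ : (m : ℕ) → (Fin (m + 1) → Fin n) → Fin n × Fin n, QuasiDeloc f χ₁ χ₂) :
    ∃ (m : ℕ) (g : St m → St m), ExpandsTo f g ∧ IsAndNet g ∧ ∀ y, ¬ hasNegCycleAt g y := by
  obtain ⟨χ₁, χ₂, hQ⟩ := hχ
  exact ⟨QD.MM n, QD.gg hf χ₁ χ₂, QD.expands_gg hf χ₁ χ₂ hQ, QD.isAndNet_gg hf χ₁ χ₂,
    fun y => QD.no_negcycle_gg hf χ₁ χ₂ hQ y⟩
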